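/- arXiv:1309.1349 — 5 statements merged into one kernel-verified Lean document; each statement's English description precedes it below -/
import Mathlib

section
/- Let G = (V,E) be a weakly connected oriented graph with incidence matrix A, Laplacian L = AᵀA, and maximum degree d_max, let b ∈ ℝ^{E}, and let 0 < τ < 1/d_max. Then the gradient descent iteration x(k+1) = (I − τL) x(k) + τ Aᵀ b with initial condition x(0) = 0 converges, as k → ∞, to the optimal least-squares solution x⋆, i.e. to the unique minimum-Euclidean-norm minimizer of z ↦ ‖A z − b‖₂². -/
open Matrix Filter

private lemma aux_quad (α β : ℝ) (hα : 0 ≤ α) (h : ∀ t : ℝ, 0 ≤ α * t ^ 2 + β * t) :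
    β = 0 := by
  by_contra hβ
  have h1 : 0 < α + 1 := by linarith
  have h2 := h (-β / (α + 1))
  have hβ2 : 0 < β ^ 2 := by positivity
  have hne : (α + 1) ≠ 0 := ne_of_gt h1
  rw [div_pow, neg_pow] at h2
  field_simp at h2
  nlinarith [mul_pos hβ2 h1]

private lemma aux_sum_sq_expand {ι : Type*} [Fintype ι] (a c : ι → ℝ) (t : ℝ) :
    ∑ i, (a i + t * c i) ^ 2
      = ∑ i, a i ^ 2 + (2 * ∑ i, a i * c i) * t + (∑ i, c i ^ 2) * t ^ 2 := by
  rw [Finset.sum_mul, Finset.mul_sum, Finset.sum_mul]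
  rw [← Finset.sum_add_distrib, ← Finset.sum_add_distrib]
  exact Finset.sum_congr rfl fun i _ => by ring

/-- For a weakly connected oriented graph with incidence matrix `A`,
Laplacian `L = AᵀA` and maximum degree `d_max`, and any `0 < τ < 1/d_max`,
the gradient descent iteration `x(k+1) = (I - τL) x(k) + τ Aᵀ b` started at
`x(0) = 0` converges to the unique minimum-Euclidean-norm minimizer of
`z ↦ ‖A z - b‖₂²`. -/
theorem stmt4 {n : ℕ} (hn : 3 ≤ n) (E : Finset (Fin n × Fin n))
    (horient : ∀ e ∈ E, e.1 < e.2)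
    (hconn : (SimpleGraph.fromRel (fun i j => (i, j) ∈ E)).Connected)
    (A : Matrix {e // e ∈ E} (Fin n) ℝ)
    (hA : ∀ (e : {e // e ∈ E}) (i : Fin n),
      A e i = if (e : Fin n × Fin n).1 = i then 1
        else if (e : Fin n × Fin n).2 = i then -1 else 0)
    (b : {e // e ∈ E} → ℝ)
    (dmax : ℕ)
    (hdmax : dmax = Finset.univ.sup
      (fun i => (E.filter (fun e => e.1 = i ∨ e.2 = i)).card))
    (τ : ℝ) (hτ0 : 0 < τ) (hτ1 : τ < 1 / (dmax : ℝ))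
    (x : ℕ → Fin n → ℝ) (hx0 : x 0 = 0)
    (hx : ∀ k, x (k + 1) =
      ((1 : Matrix (Fin n) (Fin n) ℝ) - τ • (Aᵀ * A)).mulVec (x k)
        + τ • Aᵀ.mulVec b)
    (xstar : Fin n → ℝ)
    (hxstar_min : ∀ z : Fin n → ℝ,
      ∑ e : {e // e ∈ E}, (A.mulVec xstar - b) e ^ 2 ≤
        ∑ e : {e // e ∈ E}, (A.mulVec z - b) e ^ 2)
    (hxstar_norm : ∀ y : Fin n → ℝ,
      (∀ z : Fin n → ℝ,
        ∑ e : {e // e ∈ E}, (A.mulVec y - b) e ^ 2 ≤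
          ∑ e : {e // e ∈ E}, (A.mulVec z - b) e ^ 2) →
      ∑ i, xstar i ^ 2 ≤ ∑ i, y i ^ 2) :
    Tendsto x atTop (nhds xstar) := by
  classical
  set M : Matrix (Fin n) (Fin n) ℝ := 1 - τ • (Aᵀ * A) with hM
  -- dmax is positive
  have hdm0 : 0 < (dmax : ℝ) := by
    rcases Nat.eq_zero_or_pos dmax with h | h
    · rw [h] at hτ1; norm_num at hτ1; linarith
    · exact_mod_cast h
  have hτd : τ * (dmax : ℝ) < 1 := by
    rw [lt_div_iff₀ hdm0] at hτ1; linarith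
  -- adjoint identity
  have hadj : ∀ (v : Fin n → ℝ) (u : {e // e ∈ E} → ℝ),
      v ⬝ᵥ Aᵀ.mulVec u = A.mulVec v ⬝ᵥ u := by
    intro v u
    simp only [mulVec, dotProduct, transpose_apply]
    simp_rw [Finset.mul_sum, Finset.sum_mul]
    rw [Finset.sum_comm]
    exact Finset.sum_congr rfl fun i _ => Finset.sum_congr rfl fun e _ => by ring
  -- key spectral bound : ‖Aᵀ u‖² ≤ 2 dmax ‖u‖²
  have hkey : ∀ u : {e // e ∈ E} → ℝ,
      ∑ i, (Aᵀ.mulVec u) i ^ 2 ≤ 2 * (dmax : ℝ) * ∑ e, u e ^ 2 := by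
    intro u
    have hdeg : ∀ i : Fin n, ∑ e : {e // e ∈ E}, (A e i) ^ 2 ≤ (dmax : ℝ) := by
      intro i
      have h1 : ∀ e : {e // e ∈ E}, (A e i) ^ 2
          = if (e : Fin n × Fin n).1 = i ∨ (e : Fin n × Fin n).2 = i then (1:ℝ) else 0 := by
        intro e
        rw [hA]
        by_cases ha : (e : Fin n × Fin n).1 = i
        · simp [ha]
        · by_cases hb : (e : Fin n × Fin n).2 = i
          · simp [ha, hb]
          · simp [ha, hb]
      simp_rw [h1]
      have h2 : ∑ e : {e // e ∈ E},
          (if (e : Fin n × Fin n).1 = i ∨ (e : Fin n × Fin n).2 = i then (1:ℝ) else 0)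
          = ∑ e ∈ E, (if e.1 = i ∨ e.2 = i then (1:ℝ) else 0) :=
        Finset.sum_coe_sort E (fun e => if e.1 = i ∨ e.2 = i then (1:ℝ) else 0)
      rw [h2, Finset.sum_boole]
      have h3 : (E.filter (fun e => e.1 = i ∨ e.2 = i)).card ≤ dmax := by
        rw [hdmax]
        exact Finset.le_sup
          (f := fun i => (E.filter (fun e => e.1 = i ∨ e.2 = i)).card) (Finset.mem_univ i)
      exact_mod_cast h3
    have htwo : ∀ e : {e // e ∈ E}, ∑ i, (A e i) ^ 2 = 2 := by
      intro e
      have hne : (e : Fin n × Fin n).1 ≠ (e : Fin n × Fin n).2 := ne_of_lt (horient _ e.2)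
      have h1 : ∀ i, (A e i) ^ 2
          = (if (e : Fin n × Fin n).1 = i then (1:ℝ) else 0)
            + (if (e : Fin n × Fin n).2 = i then (1:ℝ) else 0) := by
        intro i
        rw [hA]
        by_cases ha : (e : Fin n × Fin n).1 = i
        · have hb : ¬ (e : Fin n × Fin n).2 = i := fun h => hne (ha.trans h.symm)
          simp [ha, hb]
        · by_cases hb : (e : Fin n × Fin n).2 = i
          · simp [ha, hb]
          · simp [ha, hb]
      simp_rw [h1, Finset.sum_add_distrib, Finset.sum_ite_eq, Finset.mem_univ, if_true]
      norm_num
    have hCS : ∀ i : Fin n, ((Aᵀ.mulVec u) i) ^ 2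
        ≤ (∑ e : {e // e ∈ E}, (A e i) ^ 2) * ∑ e : {e // e ∈ E}, (A e i) ^ 2 * u e ^ 2 := by
      intro i
      have h0 : (Aᵀ.mulVec u) i = ∑ e : {e // e ∈ E}, |A e i| * (A e i * u e) := by
        simp only [mulVec, dotProduct, transpose_apply]
        refine Finset.sum_congr rfl fun e _ => ?_
        have habs : |A e i| * A e i = A e i := by
          rw [hA]
          by_cases ha : (e : Fin n × Fin n).1 = i
          · simp [ha]
          · by_cases hb : (e : Fin n × Fin n).2 = i <;> simp [ha, hb]
        rw [← mul_assoc, habs]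
      rw [h0]
      calc (∑ e : {e // e ∈ E}, |A e i| * (A e i * u e)) ^ 2
          ≤ (∑ e : {e // e ∈ E}, |A e i| ^ 2) * ∑ e : {e // e ∈ E}, (A e i * u e) ^ 2 :=
            Finset.sum_mul_sq_le_sq_mul_sq _ _ _
        _ = (∑ e : {e // e ∈ E}, (A e i) ^ 2) * ∑ e : {e // e ∈ E}, (A e i) ^ 2 * u e ^ 2 := by
            rw [show (∑ e : {e // e ∈ E}, |A e i| ^ 2) = ∑ e : {e // e ∈ E}, (A e i) ^ 2 from
              Finset.sum_congr rfl fun e _ => sq_abs _]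
            congr 1
            exact Finset.sum_congr rfl fun e _ => by rw [mul_pow]
    calc ∑ i, (Aᵀ.mulVec u) i ^ 2
        ≤ ∑ i, (dmax : ℝ) * ∑ e : {e // e ∈ E}, (A e i) ^ 2 * u e ^ 2 := by
          refine Finset.sum_le_sum fun i _ => (hCS i).trans ?_
          refine mul_le_mul_of_nonneg_right (hdeg i) ?_
          exact Finset.sum_nonneg fun e _ => by positivity
      _ = (dmax : ℝ) * ∑ e : {e // e ∈ E}, (∑ i, (A e i) ^ 2) * u e ^ 2 := by
          rw [← Finset.mul_sum]
          congr 1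
          rw [Finset.sum_comm]
          exact Finset.sum_congr rfl fun e _ => by rw [Finset.sum_mul]
      _ = (dmax : ℝ) * ∑ e : {e // e ∈ E}, 2 * u e ^ 2 := by
          congr 1
          exact Finset.sum_congr rfl fun e _ => by rw [htwo e]
      _ = 2 * (dmax : ℝ) * ∑ e, u e ^ 2 := by
          rw [← Finset.mul_sum]; ring
  -- the residual is orthogonal to the range of A
  have horth : ∀ v : Fin n → ℝ,
      ∑ e : {e // e ∈ E}, (A.mulVec xstar - b) e * (A.mulVec v) e = 0 := by
    intro v
    have h4 : ∀ t : ℝ, 0 ≤ (∑ e : {e // e ∈ E}, (A.mulVec v) e ^ 2) * t ^ 2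
        + (2 * ∑ e : {e // e ∈ E}, (A.mulVec xstar - b) e * (A.mulVec v) e) * t := by
      intro t
      have h2 := hxstar_min (xstar + t • v)
      have h3 : ∀ e : {e // e ∈ E}, (A.mulVec (xstar + t • v) - b) e
          = (A.mulVec xstar - b) e + t * (A.mulVec v) e := by
        intro e
        rw [mulVec_add, mulVec_smul]
        simp [smul_eq_mul]
        ring
      have hR : ∑ e : {e // e ∈ E}, (A.mulVec (xstar + t • v) - b) e ^ 2
          = ∑ e : {e // e ∈ E}, (A.mulVec xstar - b) e ^ 2
            + (2 * ∑ e : {e // e ∈ E}, (A.mulVec xstar - b) e * (A.mulVec v) e) * t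
            + (∑ e : {e // e ∈ E}, (A.mulVec v) e ^ 2) * t ^ 2 := by
        rw [Finset.sum_congr rfl (fun e (_ : e ∈ Finset.univ) => by rw [h3 e])]
        exact aux_sum_sq_expand (fun e => (A.mulVec xstar - b) e) (fun e => (A.mulVec v) e) t
      rw [hR] at h2
      linarith
    have h5 := aux_quad _ _ (Finset.sum_nonneg fun e _ => sq_nonneg _) h4
    linarith
  -- normal equations : Aᵀ (A xstar - b) = 0
  have hLx : Aᵀ.mulVec (A.mulVec xstar - b) = 0 := by
    set r : {e // e ∈ E} → ℝ := A.mulVec xstar - b with hr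
    have h6 := horth (Aᵀ.mulVec r)
    have h8 : Aᵀ.mulVec r ⬝ᵥ Aᵀ.mulVec r = 0 := by
      rw [hadj, dotProduct_comm]
      exact h6
    exact dotProduct_self_eq_zero.mp h8
  -- xstar is a fixed point of the iteration
  have hfix : M.mulVec xstar + τ • Aᵀ.mulVec b = xstar := by
    have h1 : Aᵀ.mulVec (A.mulVec xstar) = Aᵀ.mulVec b := by
      have := hLx
      rw [mulVec_sub, sub_eq_zero] at this
      exact this
    rw [hM, sub_mulVec, one_mulVec, smul_mulVec, ← mulVec_mulVec, h1]
    abel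
  -- the error recursion
  have hMx : M.mulVec xstar = xstar - τ • Aᵀ.mulVec b := eq_sub_of_add_eq hfix
  have herec : ∀ k, x (k + 1) - xstar = M.mulVec (x k - xstar) := by
    intro k
    rw [hx k, mulVec_sub, hMx]
    abel
  -- the invariant subspace : orthogonal complement of ker A
  set P : (Fin n → ℝ) → Prop := fun w => ∀ u : Fin n → ℝ, A.mulVec u = 0 → w ⬝ᵥ u = 0 with hP
  -- xstar is in the orthogonal complement of ker A
  have hxsW : P (-xstar) := by
    intro u hu
    have h4 : ∀ t : ℝ, 0 ≤ (∑ i, u i ^ 2) * t ^ 2 + (2 * ∑ i, xstar i * u i) * t := by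
      intro t
      have hy : ∀ z : Fin n → ℝ,
          ∑ e : {e // e ∈ E}, (A.mulVec (xstar + t • u) - b) e ^ 2 ≤
            ∑ e : {e // e ∈ E}, (A.mulVec z - b) e ^ 2 := by
        intro z
        have : A.mulVec (xstar + t • u) = A.mulVec xstar := by
          rw [mulVec_add, mulVec_smul, hu]
          simp
        rw [this]
        exact hxstar_min z
      have h2 := hxstar_norm _ hy
      have h3 : ∑ i, (xstar + t • u) i ^ 2 = ∑ i, (xstar i + t * u i) ^ 2 :=
        Finset.sum_congr rfl fun i _ => by simp [smul_eq_mul]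
      rw [h3, aux_sum_sq_expand xstar u t] at h2
      linarith
    have h5 := aux_quad _ _ (Finset.sum_nonneg fun i _ => sq_nonneg _) h4
    have : xstar ⬝ᵥ u = 0 := by
      simp only [dotProduct]
      linarith
    simp [neg_dotProduct, this]
  -- P is preserved by M
  have hMW : ∀ w, P w → P (M.mulVec w) := by
    intro w hw u hu
    have h1 : M.mulVec w ⬝ᵥ u = w ⬝ᵥ u - τ * ((Aᵀ * A).mulVec w ⬝ᵥ u) := by
      rw [hM, sub_mulVec, one_mulVec, sub_dotProduct, smul_mulVec, smul_dotProduct,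
        smul_eq_mul]
    have h2 : (Aᵀ * A).mulVec w ⬝ᵥ u = 0 := by
      rw [← mulVec_mulVec, dotProduct_comm, hadj, hu, zero_dotProduct]
    rw [h1, h2, hw u hu]
    ring
  -- the contraction estimate
  have hcontr : ∀ w : Fin n → ℝ,
      ∑ i, (M.mulVec w) i ^ 2
        ≤ ∑ i, w i ^ 2 - (2 * τ * (1 - τ * dmax)) * ∑ e, (A.mulVec w) e ^ 2 := by
    intro w
    have h1 : ∀ i, (M.mulVec w) i = w i + (-τ) * ((Aᵀ * A).mulVec w) i := by
      intro i
      rw [hM, sub_mulVec, one_mulVec, smul_mulVec]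
      simp [smul_eq_mul]
      ring
    have h2 : ∑ i, (M.mulVec w) i ^ 2
        = ∑ i, w i ^ 2 + (2 * ∑ i, w i * ((Aᵀ * A).mulVec w) i) * (-τ)
          + (∑ i, ((Aᵀ * A).mulVec w) i ^ 2) * (-τ) ^ 2 := by
      rw [Finset.sum_congr rfl (fun i _ => by rw [h1 i])]
      exact aux_sum_sq_expand w ((Aᵀ * A).mulVec w) (-τ)
    have h3 : ∑ i, w i * ((Aᵀ * A).mulVec w) i = ∑ e, (A.mulVec w) e ^ 2 := by
      have := hadj w (A.mulVec w)
      rw [mulVec_mulVec] at this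
      simp only [dotProduct] at this
      rw [show (∑ i, w i * ((Aᵀ * A).mulVec w) i) = w ⬝ᵥ (Aᵀ * A).mulVec w from rfl]
      rw [show w ⬝ᵥ (Aᵀ * A).mulVec w = A.mulVec w ⬝ᵥ A.mulVec w from this]
      simp only [dotProduct]
      exact Finset.sum_congr rfl fun e _ => (pow_two (A.mulVec w e)).symm
    have h4 := hkey (A.mulVec w)
    rw [mulVec_mulVec] at h4
    have hS : 0 ≤ ∑ e, (A.mulVec w) e ^ 2 := Finset.sum_nonneg fun e _ => sq_nonneg _
    rw [h2, h3]
    nlinarith [hS, sq_nonneg τ, mul_le_mul_of_nonneg_left h4 (sq_nonneg τ)]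
  -- positivity of the contraction coefficient
  have hfactor : 0 < 2 * τ * (1 - τ * (dmax : ℝ)) := by nlinarith
  -- zero-sum-of-squares lemmas
  have hzero : ∀ w : Fin n → ℝ, ∑ i, w i ^ 2 = 0 → w = 0 := by
    intro w hw
    funext i
    have := (Finset.sum_eq_zero_iff_of_nonneg
      (fun i _ => sq_nonneg (w i))).mp hw i (Finset.mem_univ i)
    exact pow_eq_zero_iff two_ne_zero |>.mp this
  have hzeroE : ∀ u : {e // e ∈ E} → ℝ, ∑ e, u e ^ 2 = 0 → u = 0 := by
    intro u hu
    funext e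
    have := (Finset.sum_eq_zero_iff_of_nonneg
      (fun e _ => sq_nonneg (u e))).mp hu e (Finset.mem_univ e)
    exact pow_eq_zero_iff two_ne_zero |>.mp this
  -- the compact set of normalized vectors in the invariant subspace
  set S : Set (Fin n → ℝ) := {w | P w ∧ ∑ i, w i ^ 2 = 1} with hSdef
  have hnsq_cont : Continuous (fun w : Fin n → ℝ => ∑ i, w i ^ 2) :=
    continuous_finset_sum _ fun i _ => (continuous_apply i).pow 2
  have hg_cont : Continuous (fun w : Fin n → ℝ => ∑ i, (M.mulVec w) i ^ 2) := by
    apply continuous_finset_sum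
    intro i _
    have h1 : (fun w : Fin n → ℝ => (M.mulVec w) i) = fun w => ∑ j, M i j * w j := rfl
    have h2 : Continuous (fun w : Fin n → ℝ => (M.mulVec w) i) := by
      rw [h1]
      exact continuous_finset_sum _ fun j _ => continuous_const.mul (continuous_apply j)
    exact h2.pow 2
  have hPclosed : IsClosed {w : Fin n → ℝ | P w} := by
    have h1 : {w : Fin n → ℝ | P w}
        = ⋂ u ∈ {u : Fin n → ℝ | A.mulVec u = 0}, {w : Fin n → ℝ | w ⬝ᵥ u = 0} := by
      ext w
      simp only [hP, Set.mem_setOf_eq, Set.mem_iInter]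
    rw [h1]
    refine isClosed_biInter fun u hu => isClosed_eq ?_ continuous_const
    have : (fun w : Fin n → ℝ => w ⬝ᵥ u) = fun w => ∑ i, w i * u i := rfl
    rw [this]
    exact continuous_finset_sum _ fun i _ => (continuous_apply i).mul continuous_const
  have hSclosed : IsClosed S :=
    hPclosed.inter (isClosed_eq hnsq_cont continuous_const)
  have hScompact : IsCompact S := by
    refine IsCompact.of_isClosed_subset (isCompact_closedBall (0 : Fin n → ℝ) 1) hSclosed ?_
    intro w hw
    rw [Metric.mem_closedBall, dist_zero_right]
    rw [pi_norm_le_iff_of_nonneg zero_le_one]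
    intro i
    rw [Real.norm_eq_abs, ← sq_le_one_iff_abs_le_one]
    calc w i ^ 2 ≤ ∑ j, w j ^ 2 :=
          Finset.single_le_sum (fun j _ => sq_nonneg (w j)) (Finset.mem_univ i)
      _ = 1 := hw.2
  -- normalization
  have hnorm : ∀ w : Fin n → ℝ, P w → ∑ i, w i ^ 2 ≠ 0 →
      ((Real.sqrt (∑ i, w i ^ 2))⁻¹ • w) ∈ S ∧
      ∑ i, (M.mulVec ((Real.sqrt (∑ i, w i ^ 2))⁻¹ • w)) i ^ 2
        = (∑ i, w i ^ 2)⁻¹ * ∑ i, (M.mulVec w) i ^ 2 := by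
    intro w hPw hw
    have hs0 : 0 ≤ ∑ i, w i ^ 2 := Finset.sum_nonneg fun i _ => sq_nonneg _
    have hspos : 0 < ∑ i, w i ^ 2 := lt_of_le_of_ne hs0 (Ne.symm hw)
    have hsq : (Real.sqrt (∑ i, w i ^ 2)) ^ 2 = ∑ i, w i ^ 2 := Real.sq_sqrt hs0
    have hsqrtpos : 0 < Real.sqrt (∑ i, w i ^ 2) := Real.sqrt_pos.mpr hspos
    constructor
    · constructor
      · intro u hu
        rw [smul_dotProduct, hPw u hu, smul_eq_mul, mul_zero]
      · have : ∀ i, (((Real.sqrt (∑ i, w i ^ 2))⁻¹ • w) i) ^ 2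
            = ((Real.sqrt (∑ i, w i ^ 2))⁻¹) ^ 2 * w i ^ 2 := by
          intro i
          simp [smul_eq_mul, mul_pow]
        rw [Finset.sum_congr rfl fun i _ => this i, ← Finset.mul_sum, inv_pow, hsq]
        exact inv_mul_cancel₀ (ne_of_gt hspos)
    · rw [mulVec_smul]
      have : ∀ i, ((((Real.sqrt (∑ i, w i ^ 2))⁻¹ • M.mulVec w)) i) ^ 2
          = ((Real.sqrt (∑ i, w i ^ 2))⁻¹) ^ 2 * (M.mulVec w) i ^ 2 := by
        intro i
        simp [smul_eq_mul, mul_pow]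
      rw [Finset.sum_congr rfl fun i _ => this i, ← Finset.mul_sum, inv_pow, hsq]
  -- the contraction constant
  have hc : ∃ c : ℝ, 0 ≤ c ∧ c < 1 ∧
      ∀ w, P w → ∑ i, (M.mulVec w) i ^ 2 ≤ c * ∑ i, w i ^ 2 := by
    rcases Set.eq_empty_or_nonempty S with hSe | hSne
    · refine ⟨1/2, by norm_num, by norm_num, ?_⟩
      intro w hPw
      by_cases hw : ∑ i, w i ^ 2 = 0
      · rw [hzero w hw]
        simp [Matrix.mulVec_zero]
      · exact absurd ((hnorm w hPw hw).1) (by rw [hSe]; exact Set.notMem_empty _)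
    · obtain ⟨w₀, hw₀S, hmax⟩ := hScompact.exists_isMaxOn hSne hg_cont.continuousOn
      refine ⟨∑ i, (M.mulVec w₀) i ^ 2, Finset.sum_nonneg fun i _ => sq_nonneg _, ?_, ?_⟩
      · -- strict contraction at w₀
        have hSpos : 0 < ∑ e, (A.mulVec w₀) e ^ 2 := by
          rcases lt_or_eq_of_le (Finset.sum_nonneg
            (fun e (_ : e ∈ Finset.univ) => sq_nonneg ((A.mulVec w₀) e))) with h | h
          · exact h
          · exfalso
            have hA0 : A.mulVec w₀ = 0 := hzeroE _ h.symm
            have := hw₀S.1 w₀ hA0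
            rw [show w₀ ⬝ᵥ w₀ = ∑ i, w₀ i * w₀ i from rfl] at this
            have h2 : ∑ i, w₀ i ^ 2 = 0 := by
              rw [← this]
              exact Finset.sum_congr rfl fun i _ => pow_two _
            rw [hw₀S.2] at h2
            norm_num at h2
        have := hcontr w₀
        rw [hw₀S.2] at this
        nlinarith [mul_pos hfactor hSpos]
      · intro w hPw
        by_cases hw : ∑ i, w i ^ 2 = 0
        · rw [hzero w hw]
          simp [Matrix.mulVec_zero]
        · obtain ⟨hmem, heq⟩ := hnorm w hPw hw
          have h1 : ∑ i, (M.mulVec ((Real.sqrt (∑ i, w i ^ 2))⁻¹ • w)) i ^ 2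
              ≤ ∑ i, (M.mulVec w₀) i ^ 2 := hmax hmem
          rw [heq] at h1
          have hspos : 0 < ∑ i, w i ^ 2 :=
            lt_of_le_of_ne (Finset.sum_nonneg fun i _ => sq_nonneg _) (Ne.symm hw)
          rw [inv_mul_le_iff₀ hspos] at h1
          linarith [h1]
  -- the error stays in the invariant subspace
  have hPk : ∀ k, P (x k - xstar) := by
    intro k
    induction k with
    | zero =>
      rw [hx0, zero_sub]
      exact hxsW
    | succ k ih =>
      rw [herec k]
      exact hMW _ ih
  obtain ⟨c, hc0, hc1, hcb⟩ := hc
  set B := ∑ i, (x 0 - xstar) i ^ 2 with hB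
  have hbound : ∀ k, ∑ i, (x k - xstar) i ^ 2 ≤ c ^ k * B := by
    intro k
    induction k with
    | zero => simp [hB]
    | succ k ih =>
      have h1 : ∑ i, (x (k+1) - xstar) i ^ 2 = ∑ i, (M.mulVec (x k - xstar)) i ^ 2 := by
        rw [herec k]
      rw [h1]
      calc ∑ i, (M.mulVec (x k - xstar)) i ^ 2
          ≤ c * ∑ i, (x k - xstar) i ^ 2 := hcb _ (hPk k)
        _ ≤ c * (c ^ k * B) := mul_le_mul_of_nonneg_left ih hc0
        _ = c ^ (k+1) * B := by ring
  have hto0 : Tendsto (fun k => c ^ k * B) atTop (nhds 0) := by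
    have := (tendsto_pow_atTop_nhds_zero_of_lt_one hc0 hc1).mul_const B
    simpa using this
  have hD : Tendsto (fun k => ∑ i, (x k - xstar) i ^ 2) atTop (nhds 0) :=
    tendsto_of_tendsto_of_tendsto_of_le_of_le tendsto_const_nhds hto0
      (fun k => Finset.sum_nonneg fun i _ => sq_nonneg _) hbound
  rw [tendsto_pi_nhds]
  intro i
  have hsq : Tendsto (fun k => (x k i - xstar i) ^ 2) atTop (nhds 0) := by
    refine tendsto_of_tendsto_of_tendsto_of_le_of_le tendsto_const_nhds hD
      (fun k => sq_nonneg _) (fun k => ?_)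
    have := Finset.single_le_sum
      (fun j (_ : j ∈ Finset.univ) => sq_nonneg ((x k - xstar) j)) (Finset.mem_univ i)
    simpa using this
  have habs : Tendsto (fun k => |x k i - xstar i|) atTop (nhds 0) := by
    have h1 := (Real.continuous_sqrt.tendsto' 0 0 Real.sqrt_zero).comp hsq
    simpa [Function.comp_def, Real.sqrt_sq_eq_abs] using h1
  have h9 : Tendsto (fun k => x k i - xstar i) atTop (nhds 0) := by
    rw [tendsto_zero_iff_abs_tendsto_zero]
    exact habs
  have h10 := h9.add (tendsto_const_nhds (x := xstar i) (f := atTop))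
  simpa using h10
end

section
/- Let Q ∈ ℝ^{V×V} be a substochastic matrix (row version: nonnegative entries with each row summing to at most 1). If in the graph associated to Q (with an edge (i,j) whenever Q_{ij} > 0) there is a directed path from every node to some deficiency node (a node whose row sum is strictly less than 1), then Q is Schur stable. -/
open Matrix

/-- A row-substochastic matrix `Q` such that, in the associated graph
(an edge `(i,j)` whenever `Q i j > 0`), every node has a directed path to
some deficiency node (a node whose row sum is `< 1`), is Schur stable:
every complex eigenvalue of `Q` has absolute value strictly less than one. -/
theorem stmt5 {V : Type*} [Fintype V] [DecidableEq V] (Q : Matrix V V ℝ)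
    (hnonneg : ∀ i j, 0 ≤ Q i j) (hsub : ∀ i, ∑ j, Q i j ≤ 1)
    (hpath : ∀ i : V, ∃ j : V,
      Relation.ReflTransGen (fun a b => 0 < Q a b) i j ∧ ∑ h, Q j h < 1) :
    ∀ μ ∈ spectrum ℂ (Q.map Complex.ofReal), ‖μ‖ < 1 := by
  intro μ hμ
  by_contra hge
  push_neg at hge
  rw [spectrum.mem_iff, Matrix.isUnit_iff_isUnit_det, isUnit_iff_ne_zero, not_not] at hμ
  obtain ⟨v, hv0, hv⟩ := (Matrix.exists_mulVec_eq_zero_iff).2 hμ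
  have hv' : μ • v = (Q.map Complex.ofReal) *ᵥ v := by
    have h : (algebraMap ℂ (Matrix V V ℂ) μ) *ᵥ v = (Q.map Complex.ofReal) *ᵥ v := by
      rwa [Matrix.sub_mulVec, sub_eq_zero] at hv
    have ha : (algebraMap ℂ (Matrix V V ℂ)) μ = μ • (1 : Matrix V V ℂ) :=
      (Algebra.algebraMap_eq_smul_one μ)
    rwa [ha, Matrix.smul_mulVec, Matrix.one_mulVec] at h
  have hAv : ∀ i, μ * v i = ∑ j, (Q i j : ℂ) * v j := by
    intro i
    have h := congrFun hv' i
    simpa [Matrix.mulVec, dotProduct, Matrix.map_apply] using h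
  have key : ∀ i, ‖μ‖ * ‖v i‖ ≤ ∑ j, Q i j * ‖v j‖ := by
    intro i
    rw [← norm_mul, hAv i]
    calc ‖∑ j, (Q i j : ℂ) * v j‖
        ≤ ∑ j, ‖(Q i j : ℂ) * v j‖ := norm_sum_le _ _
      _ = ∑ j, Q i j * ‖v j‖ := by
          refine Finset.sum_congr rfl fun j _ => ?_
          rw [norm_mul, Complex.norm_real, Real.norm_eq_abs, abs_of_nonneg (hnonneg i j)]
  have hne : (Finset.univ : Finset V).Nonempty := by
    obtain ⟨i, _⟩ := Function.ne_iff.mp hv0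
    exact ⟨i, Finset.mem_univ i⟩
  obtain ⟨i0, -, hmax⟩ := Finset.exists_max_image Finset.univ (fun i => ‖v i‖) hne
  set M := ‖v i0‖ with hM
  have hmax' : ∀ i, ‖v i‖ ≤ M := fun i => hmax i (Finset.mem_univ i)
  have hMpos : 0 < M := by
    rcases (norm_nonneg (v i0)).lt_or_eq with h | h
    · exact h
    · exfalso; apply hv0; funext i
      have h2 := hmax' i
      rw [hM, ← h] at h2
      simpa using norm_eq_zero.mp (le_antisymm h2 (norm_nonneg _))
  have step : ∀ b, ‖v b‖ = M →
      (∑ j, Q b j = 1) ∧ ∀ c, 0 < Q b c → ‖v c‖ = M := by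
    intro b hb
    have h1 : ∀ j, Q b j * ‖v j‖ ≤ Q b j * M :=
      fun j => mul_le_mul_of_nonneg_left (hmax' j) (hnonneg b j)
    have h2 : M ≤ ∑ j, Q b j * ‖v j‖ := by
      calc M = 1 * M := (one_mul M).symm
        _ ≤ ‖μ‖ * M := mul_le_mul_of_nonneg_right hge hMpos.le
        _ = ‖μ‖ * ‖v b‖ := by rw [hb]
        _ ≤ _ := key b
    have h3 : ∑ j, Q b j * M ≤ M := by
      rw [← Finset.sum_mul]
      calc (∑ j, Q b j) * M ≤ 1 * M := mul_le_mul_of_nonneg_right (hsub b) hMpos.le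
        _ = M := one_mul M
    have heq : ∑ j, Q b j * ‖v j‖ = ∑ j, Q b j * M :=
      le_antisymm (Finset.sum_le_sum fun j _ => h1 j) (h3.trans h2)
    constructor
    · have hsumM : (∑ j, Q b j) * M = M := by
        apply le_antisymm
        · calc (∑ j, Q b j) * M ≤ 1 * M := mul_le_mul_of_nonneg_right (hsub b) hMpos.le
            _ = M := one_mul M
        · calc M ≤ ∑ j, Q b j * ‖v j‖ := h2
            _ = ∑ j, Q b j * M := heq
            _ = (∑ j, Q b j) * M := (Finset.sum_mul _ _ _).symm
      have := mul_right_cancel₀ (ne_of_gt hMpos) (hsumM.trans (one_mul M).symm)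
      exact this
    · intro c hc
      by_contra hne'
      have hlt : ‖v c‖ < M := lt_of_le_of_ne (hmax' c) hne'
      have : ∑ j, Q b j * ‖v j‖ < ∑ j, Q b j * M :=
        Finset.sum_lt_sum (fun j _ => h1 j)
          ⟨c, Finset.mem_univ c, mul_lt_mul_of_pos_left hlt hc⟩
      exact absurd heq (ne_of_lt this)
  have reach : ∀ j, Relation.ReflTransGen (fun a b => 0 < Q a b) i0 j →
      ‖v j‖ = M := by
    intro j hj
    induction hj with
    | refl => rfl
    | tail _ hbc ih => exact (step _ ih).2 _ hbc
  obtain ⟨j, hreach, hdef⟩ := hpath i0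
  have := (step j (reach j hreach)).1
  linarith
end

section
/- Let Q ∈ ℝ^{V×V} be a substochastic matrix such that in the graph associated to Q there is a directed path from every node to some deficiency node. Then: (i) for every positive integer k, the matrix Q^k is substochastic and the set 𝒱_k of deficiency nodes of Q^k satisfies 𝒱_k ⊆ 𝒱_{k+1}; and (ii) there exists a positive integer k⋆ such that every node is a deficiency node of Q^{k⋆}, i.e. every row of Q^{k⋆} sums to strictly less than one. -/
open Matrix

section Aux

variable {V : Type*} [Fintype V] [DecidableEq V] (Q : Matrix V V ℝ)

lemma aux_pow_nonneg (hnonneg : ∀ i j, 0 ≤ Q i j) :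
    ∀ k i j, 0 ≤ (Q ^ k) i j := by
  intro k
  induction k with
  | zero => intro i j; simp [Matrix.one_apply]; positivity
  | succ n ih =>
      intro i j
      rw [pow_succ, Matrix.mul_apply]
      exact Finset.sum_nonneg fun l _ => mul_nonneg (ih i l) (hnonneg l j)

lemma aux_rowsum_succ (k : ℕ) (i : V) :
    ∑ j, (Q ^ (k + 1)) i j = ∑ l, (Q ^ k) i l * ∑ j, Q l j := by
  simp only [pow_succ, Matrix.mul_apply]
  rw [Finset.sum_comm]
  simp [Finset.mul_sum]

lemma aux_rowsum_succ' (k : ℕ) (i : V) :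
    ∑ j, (Q ^ (k + 1)) i j = ∑ l, Q i l * ∑ j, (Q ^ k) l j := by
  simp only [pow_succ', Matrix.mul_apply]
  rw [Finset.sum_comm]
  simp [Finset.mul_sum]

lemma aux_rowsum_le (hnonneg : ∀ i j, 0 ≤ Q i j) (hsub : ∀ i, ∑ j, Q i j ≤ 1) :
    ∀ k i, ∑ j, (Q ^ k) i j ≤ 1 := by
  intro k
  induction k with
  | zero => intro i; simp [Matrix.one_apply]
  | succ n ih =>
      intro i
      rw [aux_rowsum_succ]
      calc ∑ l, (Q ^ n) i l * ∑ j, Q l j ≤ ∑ l, (Q ^ n) i l * 1 :=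
            Finset.sum_le_sum fun l _ =>
              mul_le_mul_of_nonneg_left (hsub l) (aux_pow_nonneg Q hnonneg n i l)
        _ = ∑ l, (Q ^ n) i l := by simp
        _ ≤ 1 := ih i

lemma aux_rowsum_antitone (hnonneg : ∀ i j, 0 ≤ Q i j) (hsub : ∀ i, ∑ j, Q i j ≤ 1)
    (k : ℕ) (i : V) : ∑ j, (Q ^ (k + 1)) i j ≤ ∑ j, (Q ^ k) i j := by
  rw [aux_rowsum_succ]
  calc ∑ l, (Q ^ k) i l * ∑ j, Q l j ≤ ∑ l, (Q ^ k) i l * 1 :=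
        Finset.sum_le_sum fun l _ =>
          mul_le_mul_of_nonneg_left (hsub l) (aux_pow_nonneg Q hnonneg k i l)
    _ = ∑ l, (Q ^ k) i l := by simp

lemma aux_defic_mono (hnonneg : ∀ i j, 0 ≤ Q i j) (hsub : ∀ i, ∑ j, Q i j ≤ 1)
    {k m : ℕ} (hkm : k ≤ m) {i : V} (h : ∑ j, (Q ^ k) i j < 1) :
    ∑ j, (Q ^ m) i j < 1 := by
  induction m, hkm using Nat.le_induction with
  | base => exact h
  | succ n hn ih => exact lt_of_le_of_lt (aux_rowsum_antitone Q hnonneg hsub n i) ih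

end Aux

/-- Let `Q` be a row-substochastic matrix such that, in its associated graph,
every node has a directed path to some deficiency node. Then (i) every power
`Q^k` (`k ≥ 1`) is substochastic and the set of deficiency nodes of `Q^k` is
contained in that of `Q^(k+1)`; and (ii) there is a power `Q^k⋆` all of whose
rows sum to strictly less than one. -/
theorem stmt6 {V : Type*} [Fintype V] [DecidableEq V] (Q : Matrix V V ℝ)
    (hnonneg : ∀ i j, 0 ≤ Q i j) (hsub : ∀ i, ∑ j, Q i j ≤ 1)
    (hpath : ∀ i : V, ∃ j : V,
      Relation.ReflTransGen (fun a b => 0 < Q a b) i j ∧ ∑ h, Q j h < 1) :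
    (∀ k : ℕ, 1 ≤ k →
      (∀ i j, 0 ≤ (Q ^ k) i j) ∧ (∀ i, ∑ j, (Q ^ k) i j ≤ 1) ∧
      {i | ∑ j, (Q ^ k) i j < 1} ⊆ {i | ∑ j, (Q ^ (k + 1)) i j < 1}) ∧
    (∃ kstar : ℕ, 1 ≤ kstar ∧ ∀ i, ∑ j, (Q ^ kstar) i j < 1) := by
  constructor
  · intro k _
    refine ⟨aux_pow_nonneg Q hnonneg k, aux_rowsum_le Q hnonneg hsub k, ?_⟩
    intro i hi
    exact lt_of_le_of_lt (aux_rowsum_antitone Q hnonneg hsub k i) hi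
  · -- every node is eventually deficient
    have key : ∀ i : V, ∃ k : ℕ, 1 ≤ k ∧ ∑ j, (Q ^ k) i j < 1 := by
      intro i
      obtain ⟨j, hij, hj⟩ := hpath i
      induction hij using Relation.ReflTransGen.head_induction_on with
      | refl => exact ⟨1, le_refl 1, by simpa using hj⟩
      | head hab _ ih =>
          rename_i a b _
          obtain ⟨m, hm1, hm⟩ := ih
          refine ⟨m + 1, Nat.le_add_left 1 m, ?_⟩
          rw [aux_rowsum_succ']
          have hlt : ∑ l, Q a l * ∑ j, (Q ^ m) l j < ∑ l, Q a l := by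
            apply Finset.sum_lt_sum
            · intro l _
              exact mul_le_of_le_one_right (hnonneg a l)
                (aux_rowsum_le Q hnonneg hsub m l)
            · exact ⟨b, Finset.mem_univ b, by nlinarith⟩
          exact lt_of_lt_of_le hlt (hsub a)
    choose f hf1 hf2 using key
    refine ⟨max 1 (Finset.univ.sup f), le_max_left _ _, fun i => ?_⟩
    exact aux_defic_mono Q hnonneg hsub
      (le_max_of_le_right (Finset.le_sup (Finset.mem_univ i))) (hf2 i)
end

section
/- Let A ∈ ℝ^{n×n} be column-stochastic, let m ∈ (0,1), and let M = (1−m)A + (m/n)𝟙𝟙ᵀ. Then I − (1−m)A is invertible, and for every initial condition x(0) ∈ ℝ^n with 𝟙ᵀ x(0) = 1, the sequence defined by x(k+1) = M x(k) converges, as k → ∞, to the PageRank vector π = (I − (1−m)A)^{-1} (m/n) 𝟙. -/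
open Matrix Filter

/-- PageRank computation: for a column-stochastic matrix `A`, `m ∈ (0,1)` and
the Google matrix `M = (1-m)A + (m/n)𝟙𝟙ᵀ`, the matrix `I - (1-m)A` is
invertible and, for every stochastic-sum initial condition (`𝟙ᵀ x(0) = 1`),
the power iteration `x(k+1) = M x(k)` converges to the PageRank vector
`π = (I - (1-m)A)⁻¹ (m/n) 𝟙`. -/
theorem stmt7 {n : ℕ} (hn : 3 ≤ n)
    (A : Matrix (Fin n) (Fin n) ℝ)
    (hnonneg : ∀ i j, 0 ≤ A i j) (hcol : ∀ j, ∑ i, A i j = 1)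
    (m : ℝ) (hm : m ∈ Set.Ioo (0 : ℝ) 1)
    (M : Matrix (Fin n) (Fin n) ℝ)
    (hM : M = (1 - m) • A + (m / n) • Matrix.of (fun _ _ => (1 : ℝ)))
    (x : ℕ → Fin n → ℝ) (hx0 : ∑ i, x 0 i = 1)
    (hx : ∀ k, x (k + 1) = M.mulVec (x k)) :
    IsUnit (1 - (1 - m) • A) ∧
      Tendsto x atTop
        (nhds ((1 - (1 - m) • A)⁻¹.mulVec (fun _ => m / n))) := by
  obtain ⟨hm0, hm1⟩ := hm
  have hn0 : (0:ℝ) < n := by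
    have : (3:ℝ) ≤ n := by exact_mod_cast hn
    linarith
  set B : Matrix (Fin n) (Fin n) ℝ := (1 - m) • A with hBdef
  have hBnonneg : ∀ i j, 0 ≤ B i j := fun i j => by
    have := hnonneg i j
    simp only [hBdef, Matrix.smul_apply, smul_eq_mul]
    nlinarith
  have hBcol : ∀ j, ∑ i, B i j = 1 - m := fun j => by
    simp only [hBdef, Matrix.smul_apply, smul_eq_mul, ← Finset.mul_sum, hcol j, mul_one]
  -- key contraction estimate in the ℓ¹ norm
  have key : ∀ v : Fin n → ℝ, ∑ i, |B.mulVec v i| ≤ (1 - m) * ∑ i, |v i| := by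
    intro v
    simp only [Matrix.mulVec, dotProduct]
    calc ∑ i, |∑ j, B i j * v j|
        ≤ ∑ i, ∑ j, B i j * |v j| := by
          refine Finset.sum_le_sum fun i _ => ?_
          refine (Finset.abs_sum_le_sum_abs (fun j => B i j * v j) _).trans ?_
          refine Finset.sum_le_sum fun j _ => ?_
          rw [abs_mul, abs_of_nonneg (hBnonneg i j)]
      _ = ∑ j, (∑ i, B i j) * |v j| := by
          rw [Finset.sum_comm]
          simp [Finset.sum_mul]
      _ = (1 - m) * ∑ j, |v j| := by
          simp only [hBcol]; rw [Finset.mul_sum]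
  have hU : IsUnit (1 - B) := by
    rw [← Matrix.mulVec_injective_iff_isUnit]
    intro u v huv
    have h0 : (1 - B).mulVec (u - v) = 0 := by
      rw [Matrix.mulVec_sub, huv, sub_self]
    have hw : u - v = B.mulVec (u - v) := by
      have := h0
      rw [Matrix.sub_mulVec, Matrix.one_mulVec, sub_eq_zero] at this
      exact this
    have hN : ∑ i, |(u - v) i| ≤ (1 - m) * ∑ i, |(u - v) i| := by
      conv_lhs => rw [hw]
      exact key _
    have hN0 : ∑ i, |(u - v) i| = 0 := by
      have hnn : 0 ≤ ∑ i, |(u - v) i| :=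
        Finset.sum_nonneg fun i _ => abs_nonneg _
      nlinarith
    have : ∀ i, (u - v) i = 0 := by
      intro i
      have := (Finset.sum_eq_zero_iff_of_nonneg
        (fun j _ => abs_nonneg ((u - v) j))).mp hN0 i (Finset.mem_univ i)
      exact abs_eq_zero.mp this
    funext i
    have := this i
    simpa [sub_eq_zero] using this
  refine ⟨hU, ?_⟩
  set π : Fin n → ℝ := (1 - B)⁻¹.mulVec (fun _ => m / n) with hπdef
  have hdet : IsUnit (1 - B).det := (Matrix.isUnit_iff_isUnit_det _).mp hU
  have hfix : (1 - B).mulVec π = fun _ => m / n := by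
    rw [hπdef, Matrix.mulVec_mulVec, Matrix.mul_nonsing_inv _ hdet, Matrix.one_mulVec]
  have hπpt : ∀ i, π i - B.mulVec π i = m / n := by
    intro i
    have := congrFun hfix i
    rw [Matrix.sub_mulVec, Matrix.one_mulVec] at this
    simpa using this
  -- the sum of the iterates remains 1
  have hsum : ∀ k, ∑ i, x k i = 1 := by
    intro k
    induction k with
    | zero => exact hx0
    | succ k ih =>
      rw [hx k]
      have : ∑ i, M.mulVec (x k) i = ∑ j, (∑ i, M i j) * x k j := by
        simp only [Matrix.mulVec, dotProduct]
        rw [Finset.sum_comm]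
        simp [Finset.sum_mul]
      rw [this]
      have hMcol : ∀ j, ∑ i, M i j = 1 := by
        intro j
        simp only [hM, Matrix.add_apply, Matrix.smul_apply, Matrix.of_apply, smul_eq_mul,
          Finset.sum_add_distrib, hBcol j, mul_one, Finset.sum_const, Finset.card_univ,
          Fintype.card_fin, nsmul_eq_mul]
        field_simp
        ring
      simp only [hMcol, one_mul]
      exact ih
  -- the recurrence in terms of B
  have hstep : ∀ k i, x (k + 1) i = B.mulVec (x k) i + m / n := by
    intro k i
    have h2 : ((m / (n:ℝ)) • Matrix.of fun _ _ => (1:ℝ)).mulVec (x k) i = m / n := by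
      simp only [Matrix.mulVec, dotProduct, Matrix.smul_apply, Matrix.of_apply,
        smul_eq_mul, mul_one, ← Finset.mul_sum, hsum k]
    rw [hx k, hM, Matrix.add_mulVec, Pi.add_apply, h2]
  -- error recurrence
  have herr : ∀ k, (fun i => x (k + 1) i - π i) = B.mulVec (fun i => x k i - π i) := by
    intro k
    funext i
    have h1 : B.mulVec (fun i => x k i - π i) i = B.mulVec (x k) i - B.mulVec π i := by
      have : (fun i => x k i - π i) = x k - π := rfl
      rw [this, Matrix.mulVec_sub, Pi.sub_apply]
    rw [h1, hstep k i]
    have := hπpt i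
    linarith
  -- contraction estimate for the error
  have hbound : ∀ k, ∑ i, |x k i - π i| ≤ (1 - m) ^ k * ∑ i, |x 0 i - π i| := by
    intro k
    induction k with
    | zero => simp
    | succ k ih =>
      have h1 : ∑ i, |x (k + 1) i - π i| ≤ (1 - m) * ∑ i, |x k i - π i| := by
        have := key (fun i => x k i - π i)
        calc ∑ i, |x (k + 1) i - π i|
            = ∑ i, |B.mulVec (fun i => x k i - π i) i| := by
              refine Finset.sum_congr rfl fun i _ => ?_
              rw [← congrFun (herr k) i]
          _ ≤ (1 - m) * ∑ i, |x k i - π i| := this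
      calc ∑ i, |x (k + 1) i - π i|
          ≤ (1 - m) * ∑ i, |x k i - π i| := h1
        _ ≤ (1 - m) * ((1 - m) ^ k * ∑ i, |x 0 i - π i|) := by
            apply mul_le_mul_of_nonneg_left ih (by linarith)
        _ = (1 - m) ^ (k + 1) * ∑ i, |x 0 i - π i| := by ring
  -- conclude convergence
  rw [tendsto_pi_nhds]
  intro i
  have hgeo : Tendsto (fun k => (1 - m) ^ k * ∑ i, |x 0 i - π i|) atTop (nhds 0) := by
    have := tendsto_pow_atTop_nhds_zero_of_lt_one (by linarith : (0:ℝ) ≤ 1 - m)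
      (by linarith : 1 - m < 1)
    simpa using this.mul_const _
  have habs : Tendsto (fun k => |x k i - π i|) atTop (nhds 0) := by
    refine squeeze_zero (fun k => abs_nonneg _) (fun k => ?_) hgeo
    refine le_trans ?_ (hbound k)
    exact Finset.single_le_sum (f := fun j => |x k j - π j|)
      (fun j _ => abs_nonneg _) (Finset.mem_univ i)
  rw [tendsto_iff_dist_tendsto_zero]
  simpa [Real.dist_eq] using habs
end

section
/- Let A ∈ ℝ^{n×n} be column-stochastic, let m ∈ (0,1), and let M = (1−m)A + (m/n)𝟙𝟙ᵀ. Then I − (1−m)A is invertible and the vector π = (I − (1−m)A)^{-1} (m/n) 𝟙 is the unique vector in ℝ^n satisfying M π = π and 𝟙ᵀ π = 1. -/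
open Matrix

/-- For a column-stochastic matrix `A`, `m ∈ (0,1)` and the Google matrix
`M = (1-m)A + (m/n)𝟙𝟙ᵀ`, the matrix `I - (1-m)A` is invertible and
`π = (I - (1-m)A)⁻¹ (m/n)𝟙` is the unique vector satisfying `M π = π`
and `𝟙ᵀ π = 1`. -/
theorem stmt8 {n : ℕ} (hn : 3 ≤ n)
    (A : Matrix (Fin n) (Fin n) ℝ)
    (hnonneg : ∀ i j, 0 ≤ A i j) (hcol : ∀ j, ∑ i, A i j = 1)
    (m : ℝ) (hm : m ∈ Set.Ioo (0 : ℝ) 1)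
    (M : Matrix (Fin n) (Fin n) ℝ)
    (hM : M = (1 - m) • A + (m / n) • Matrix.of (fun _ _ => (1 : ℝ))) :
    IsUnit (1 - (1 - m) • A) ∧
      (M.mulVec ((1 - (1 - m) • A)⁻¹.mulVec (fun _ => m / n)) =
          (1 - (1 - m) • A)⁻¹.mulVec (fun _ => m / n) ∧
        ∑ i, (1 - (1 - m) • A)⁻¹.mulVec (fun _ => m / n) i = 1) ∧
      (∀ y : Fin n → ℝ, M.mulVec y = y → ∑ i, y i = 1 →
        y = (1 - (1 - m) • A)⁻¹.mulVec (fun _ => m / n)) := by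
  obtain ⟨hm0, hm1⟩ := hm
  have hnpos : (0 : ℝ) < n := by
    have : (3 : ℝ) ≤ n := by exact_mod_cast hn
    linarith
  set B : Matrix (Fin n) (Fin n) ℝ := 1 - (1 - m) • A with hBdef
  -- injectivity of mulVec B
  have hinj : Function.Injective B.mulVec := by
    intro x y hxy
    have hz : B.mulVec (x - y) = 0 := by
      rw [Matrix.mulVec_sub, hxy, sub_self]
    set z := x - y with hzdef
    have hz' : ∀ i, z i = (1 - m) * ∑ j, A i j * z j := by
      intro i
      have := congrFun hz i
      simp only [hBdef, Matrix.sub_mulVec, Matrix.one_mulVec, Matrix.smul_mulVec,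
        Pi.sub_apply, Pi.smul_apply, smul_eq_mul, Pi.zero_apply, sub_eq_zero] at this
      rw [this]
      simp [Matrix.mulVec, dotProduct]
    have hsum : ∑ i, |z i| ≤ (1 - m) * ∑ i, |z i| := by
      have h1 : ∀ i, |z i| ≤ (1 - m) * ∑ j, A i j * |z j| := by
        intro i
        rw [hz' i, abs_mul, abs_of_nonneg (by linarith : (0:ℝ) ≤ 1 - m)]
        refine mul_le_mul_of_nonneg_left ?_ (by linarith)
        calc |∑ j, A i j * z j| ≤ ∑ j, |A i j * z j| := Finset.abs_sum_le_sum_abs _ _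
          _ = ∑ j, A i j * |z j| := by
            refine Finset.sum_congr rfl fun j _ => ?_
            rw [abs_mul, abs_of_nonneg (hnonneg i j)]
      calc ∑ i, |z i| ≤ ∑ i, (1 - m) * ∑ j, A i j * |z j| :=
            Finset.sum_le_sum fun i _ => h1 i
        _ = (1 - m) * ∑ i, ∑ j, A i j * |z j| := by rw [← Finset.mul_sum]
        _ = (1 - m) * ∑ j, (∑ i, A i j) * |z j| := by
            rw [Finset.sum_comm]
            simp_rw [Finset.sum_mul]
        _ = (1 - m) * ∑ j, |z j| := by simp [hcol]
    have hzero : ∑ i, |z i| = 0 := by nlinarith [Finset.sum_nonneg (fun i (_ : i ∈ Finset.univ) => abs_nonneg (z i))]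
    have : ∀ i, z i = 0 := by
      intro i
      have := (Finset.sum_eq_zero_iff_of_nonneg (fun i _ => abs_nonneg (z i))).1 hzero i (Finset.mem_univ i)
      exact abs_eq_zero.1 this
    have : z = 0 := funext this
    exact sub_eq_zero.1 this
  have hunit : IsUnit B := Matrix.mulVec_injective_iff_isUnit.1 hinj
  set v : Fin n → ℝ := fun _ => m / n with hvdef
  set π : Fin n → ℝ := B⁻¹.mulVec v with hπdef
  have hBπ : B.mulVec π = v := by
    rw [hπdef, Matrix.mulVec_mulVec, Matrix.mul_nonsing_inv _ ((Matrix.isUnit_iff_isUnit_det B).1 hunit), Matrix.one_mulVec]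
  -- key identity: for any y, B y = y - (1-m)•(A y)
  have hBy : ∀ y : Fin n → ℝ, B.mulVec y = y - (1 - m) • A.mulVec y := by
    intro y
    rw [hBdef, Matrix.sub_mulVec, Matrix.one_mulVec, Matrix.smul_mulVec]
  have hsumA : ∀ y : Fin n → ℝ, ∑ i, A.mulVec y i = ∑ j, y j := by
    intro y
    simp only [Matrix.mulVec, dotProduct]
    rw [Finset.sum_comm]
    simp_rw [← Finset.sum_mul]
    simp [hcol]
  -- sum of π is 1
  have hsumv : ∑ _i : Fin n, (m / n : ℝ) = m := by
    rw [Finset.sum_const, Finset.card_univ, Fintype.card_fin, nsmul_eq_mul]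
    field_simp
  have hsumπ : ∑ i, π i = 1 := by
    have h1 : ∑ i, B.mulVec π i = ∑ i, v i := by rw [hBπ]
    rw [hBy] at h1
    simp only [Pi.sub_apply, Pi.smul_apply, smul_eq_mul, Finset.sum_sub_distrib,
      ← Finset.mul_sum, hsumA] at h1
    rw [hvdef] at h1
    rw [hsumv] at h1
    nlinarith
  -- M y = (1-m)•A y + (m/n * ∑ y) • 1
  have hMy : ∀ y : Fin n → ℝ, M.mulVec y = (1 - m) • A.mulVec y + fun _ => m / n * ∑ j, y j := by
    intro y
    funext i
    simp only [hM, Matrix.mulVec, dotProduct, Matrix.add_apply, Matrix.smul_apply,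
      Matrix.of_apply, Pi.add_apply, Pi.smul_apply, smul_eq_mul, mul_one, add_mul,
      Finset.sum_add_distrib, Finset.mul_sum]
    ring_nf
  have hfix : M.mulVec π = π := by
    have h := hBπ
    rw [hBy] at h
    rw [hMy]
    funext i
    have h2 := congrFun h i
    simp only [Pi.sub_apply, Pi.smul_apply, smul_eq_mul, hvdef] at h2
    simp only [Pi.add_apply, Pi.smul_apply, smul_eq_mul, hsumπ, mul_one]
    linarith
  refine ⟨hunit, ⟨hfix, hsumπ⟩, ?_⟩
  intro y hy hysum
  apply hinj
  rw [hBπ, hBy]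
  rw [hMy] at hy
  funext i
  have h2 := congrFun hy i
  simp only [Pi.add_apply, Pi.smul_apply, smul_eq_mul, hysum, mul_one] at h2
  simp only [Pi.sub_apply, Pi.smul_apply, smul_eq_mul, hvdef]
  linarith
end
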